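/- Let A ⊆ R ⊆ S be commutative Noetherian rings such that the inclusion R ⊆ S admits an R-linear splitting β : S → R, and let M ⊆ N be a differential direct summand compatible with β. Then the length of M as a D_{R|A}-module is at most the length of N as a D_{S|A}-module: λ_{D_{R|A}}(M) ≤ λ_{D_{S|A}}(N). -/
import Mathlib


/-- `δ` is an `A`-linear differential operator on `R` of order at most `n`. -/
def IsDiffOpOfOrder (A : Type*) {R : Type*} [CommRing A] [CommRing R] [Algebra A R] :
    ℕ → (R →ₗ[A] R) → Prop
  | 0 => fun δ => ∃ r : R, ∀ x, δ x = r * x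
  | (n+1) => fun δ => ∀ r : R,
      IsDiffOpOfOrder A n (δ ∘ₗ LinearMap.mulLeft A r - LinearMap.mulLeft A r ∘ₗ δ)

/-- `δ` is an `A`-linear differential operator on `R`. -/
def IsDiffOp (A : Type*) {R : Type*} [CommRing A] [CommRing R] [Algebra A R]
    (δ : R →ₗ[A] R) : Prop :=
  ∃ n, IsDiffOpOfOrder A n δ

/-- Restriction `β ∘ δ|_R` of a differential operator `δ` on `S` along the
`R`-linear splitting `β : S → R`. -/
def restrictOp (A R S : Type*) [CommRing A] [CommRing R] [CommRing S]
    [Algebra A R] [Algebra A S] [Algebra R S] [IsScalarTower A R S]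
    (β : S →ₗ[R] R) (δ : S →ₗ[A] S) : R →ₗ[A] R :=
  (β.restrictScalars A) ∘ₗ δ ∘ₗ ((IsScalarTower.toAlgHom A R S).toLinearMap)

/-- A `D_{R|A}`-module structure on an `R`-module `M`. -/
structure DAction (A R : Type*) [CommRing A] [CommRing R] [Algebra A R]
    (M : Type*) [AddCommGroup M] [Module A M] [Module R M] [IsScalarTower A R M] where
  act : (R →ₗ[A] R) → (M →ₗ[A] M)
  act_mulLeft : ∀ (r : R) (m : M), act (LinearMap.mulLeft A r) m = r • m
  act_add : ∀ δ₁ δ₂, IsDiffOp A δ₁ → IsDiffOp A δ₂ → act (δ₁ + δ₂) = act δ₁ + act δ₂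
  act_comp : ∀ δ₁ δ₂, IsDiffOp A δ₁ → IsDiffOp A δ₂ → act (δ₁ ∘ₗ δ₂) = act δ₁ ∘ₗ act δ₂

/-- The tautological `D_{R|A}`-module structure on `R` itself. -/
def tautDAction (A R : Type*) [CommRing A] [CommRing R] [Algebra A R] : DAction A R R where
  act δ := δ
  act_mulLeft r m := by simp [LinearMap.mulLeft_apply, smul_eq_mul]
  act_add _ _ _ _ := rfl
  act_comp _ _ _ _ := rfl

/-- A differential direct summand `M ⊆ N` compatible with the splitting `β`. -/
structure DiffDirectSummand {A R S : Type*} [CommRing A] [CommRing R] [CommRing S]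
    [Algebra A R] [Algebra A S] [Algebra R S] [IsScalarTower A R S]
    (β : S →ₗ[R] R)
    {M : Type*} [AddCommGroup M] [Module A M] [Module R M] [IsScalarTower A R M]
    {N : Type*} [AddCommGroup N] [Module A N] [Module R N] [Module S N]
    [IsScalarTower A S N] [IsScalarTower R S N] [IsScalarTower A R N]
    (actM : DAction A R M) (actN : DAction A S N) where
  incl : M →ₗ[R] N
  incl_injective : Function.Injective incl
  theta : N →ₗ[R] M
  split : ∀ m : M, theta (incl m) = m
  compat : ∀ (δ : S →ₗ[A] S), IsDiffOp A δ → ∀ m : M,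
      theta (actN.act δ (incl m)) = actM.act (restrictOp A R S β δ) m

/-- `V` is a `D_{R|A}`-submodule of `M`. -/
def DAction.IsDSubmodule {A R : Type*} [CommRing A] [CommRing R] [Algebra A R]
    {M : Type*} [AddCommGroup M] [Module A M] [Module R M] [IsScalarTower A R M]
    (a : DAction A R M) (V : Submodule R M) : Prop :=
  ∀ δ : R →ₗ[A] R, IsDiffOp A δ → ∀ v ∈ V, a.act δ v ∈ V

/-- The length of `M` as a `D_{R|A}`-module: the supremum of lengths of chains of
`D_{R|A}`-submodules of `M`. -/
noncomputable def dLength {A R : Type*} [CommRing A] [CommRing R] [Algebra A R]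
    {M : Type*} [AddCommGroup M] [Module A M] [Module R M] [IsScalarTower A R M]
    (a : DAction A R M) : WithBot ℕ∞ :=
  Order.krullDim {V : Submodule R M // a.IsDSubmodule V}

/-- The canonical (localized) `D`-module structure on a localization: the one making
the localization map equivariant. -/
def IsLocalizedDAction {A R : Type*} [CommRing A] [CommRing R] [Algebra A R]
    {M Mf : Type*} [AddCommGroup M] [Module A M] [Module R M] [IsScalarTower A R M]
    [AddCommGroup Mf] [Module A Mf] [Module R Mf] [IsScalarTower A R Mf]
    (ℓ : M →ₗ[R] Mf) (a : DAction A R M) (a' : DAction A R Mf) : Prop :=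
  ∀ δ : R →ₗ[A] R, IsDiffOp A δ → ∀ m : M, a'.act δ (ℓ m) = ℓ (a.act δ m)

/-- A morphism of differential direct summands. -/
structure IsDDSHom {A R S : Type*} [CommRing A] [CommRing R] [CommRing S]
    [Algebra A R] [Algebra A S] [Algebra R S] [IsScalarTower A R S]
    {β : S →ₗ[R] R}
    {M₁ : Type*} [AddCommGroup M₁] [Module A M₁] [Module R M₁] [IsScalarTower A R M₁]
    {N₁ : Type*} [AddCommGroup N₁] [Module A N₁] [Module R N₁] [Module S N₁]
    [IsScalarTower A S N₁] [IsScalarTower R S N₁] [IsScalarTower A R N₁]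
    {M₂ : Type*} [AddCommGroup M₂] [Module A M₂] [Module R M₂] [IsScalarTower A R M₂]
    {N₂ : Type*} [AddCommGroup N₂] [Module A N₂] [Module R N₂] [Module S N₂]
    [IsScalarTower A S N₂] [IsScalarTower R S N₂] [IsScalarTower A R N₂]
    {actM₁ : DAction A R M₁} {actN₁ : DAction A S N₁}
    {actM₂ : DAction A R M₂} {actN₂ : DAction A S N₂}
    (dds₁ : DiffDirectSummand β actM₁ actN₁) (dds₂ : DiffDirectSummand β actM₂ actN₂)
    (φ : N₁ →ₗ[S] N₂) (ψ : M₁ →ₗ[R] M₂) : Prop where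
  comm_incl : ∀ m : M₁, φ (dds₁.incl m) = dds₂.incl (ψ m)
  equivN : ∀ δ : S →ₗ[A] S, IsDiffOp A δ → ∀ x : N₁, φ (actN₁.act δ x) = actN₂.act δ (φ x)
  equivM : ∀ δ : R →ₗ[A] R, IsDiffOp A δ → ∀ m : M₁, ψ (actM₁.act δ m) = actM₂.act δ (ψ m)
  comm_theta : ∀ x : N₁, ψ (dds₁.theta x) = dds₂.theta (φ x)

section Aux

variable {A R : Type*} [CommRing A] [CommRing R] [Algebra A R]

lemma isDiffOpOfOrder_mulLeft (r : R) : IsDiffOpOfOrder A 0 (LinearMap.mulLeft A r) :=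
  ⟨r, fun _ => rfl⟩

lemma isDiffOp_mulLeft (r : R) : IsDiffOp A (LinearMap.mulLeft A r) :=
  ⟨0, isDiffOpOfOrder_mulLeft r⟩

lemma isDiffOpOfOrder_succ {n : ℕ} {δ : R →ₗ[A] R} (h : IsDiffOpOfOrder A n δ) :
    IsDiffOpOfOrder A (n + 1) δ := by
  induction n generalizing δ with
  | zero =>
    obtain ⟨c, hc⟩ := h
    intro r
    refine ⟨0, fun x => ?_⟩
    simp only [LinearMap.sub_apply, LinearMap.comp_apply, LinearMap.mulLeft_apply, hc]
    ring
  | succ n ih =>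
    intro r
    exact ih (h r)

lemma isDiffOpOfOrder_add {n : ℕ} {δ₁ δ₂ : R →ₗ[A] R} (h₁ : IsDiffOpOfOrder A n δ₁)
    (h₂ : IsDiffOpOfOrder A n δ₂) : IsDiffOpOfOrder A n (δ₁ + δ₂) := by
  induction n generalizing δ₁ δ₂ with
  | zero =>
    obtain ⟨c₁, hc₁⟩ := h₁
    obtain ⟨c₂, hc₂⟩ := h₂
    exact ⟨c₁ + c₂, fun x => by simp [hc₁, hc₂, add_mul]⟩
  | succ n ih =>
    intro r
    have key : (δ₁ + δ₂) ∘ₗ LinearMap.mulLeft A r - LinearMap.mulLeft A r ∘ₗ (δ₁ + δ₂)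
        = (δ₁ ∘ₗ LinearMap.mulLeft A r - LinearMap.mulLeft A r ∘ₗ δ₁)
          + (δ₂ ∘ₗ LinearMap.mulLeft A r - LinearMap.mulLeft A r ∘ₗ δ₂) := by
      ext x
      simp only [LinearMap.sub_apply, LinearMap.add_apply, LinearMap.comp_apply,
        LinearMap.mulLeft_apply, map_add, mul_add]
      ring
    rw [key]
    exact ih (h₁ r) (h₂ r)

lemma isDiffOpOfOrder_comp : ∀ {k m n : ℕ}, m + n = k → ∀ {δ₁ δ₂ : R →ₗ[A] R},
    IsDiffOpOfOrder A m δ₁ → IsDiffOpOfOrder A n δ₂ → IsDiffOpOfOrder A k (δ₁ ∘ₗ δ₂) := by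
  intro k
  induction k with
  | zero =>
    rintro m n hmn δ₁ δ₂ h₁ h₂
    obtain ⟨rfl, rfl⟩ : m = 0 ∧ n = 0 := by omega
    obtain ⟨c₁, hc₁⟩ := h₁
    obtain ⟨c₂, hc₂⟩ := h₂
    exact ⟨c₁ * c₂, fun x => by simp [hc₁, hc₂, mul_assoc]⟩
  | succ k ih =>
    rintro m n hmn δ₁ δ₂ h₁ h₂
    intro r
    match m, n, hmn with
    | 0, n, hmn =>
      obtain ⟨c, hc⟩ := id h₁
      have hn : n = k + 1 := by omega
      subst hn
      have key : (δ₁ ∘ₗ δ₂) ∘ₗ LinearMap.mulLeft A r - LinearMap.mulLeft A r ∘ₗ (δ₁ ∘ₗ δ₂)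
          = δ₁ ∘ₗ (δ₂ ∘ₗ LinearMap.mulLeft A r - LinearMap.mulLeft A r ∘ₗ δ₂) := by
        ext x
        simp only [LinearMap.sub_apply, LinearMap.comp_apply, LinearMap.mulLeft_apply,
          map_sub, hc]
        ring
      rw [key]
      exact ih (m := 0) (n := k) (by omega) h₁ (h₂ r)
    | m + 1, 0, hmn =>
      obtain ⟨c, hc⟩ := id h₂
      have key : (δ₁ ∘ₗ δ₂) ∘ₗ LinearMap.mulLeft A r - LinearMap.mulLeft A r ∘ₗ (δ₁ ∘ₗ δ₂)
          = (δ₁ ∘ₗ LinearMap.mulLeft A r - LinearMap.mulLeft A r ∘ₗ δ₁) ∘ₗ δ₂ := by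
        ext x
        simp only [LinearMap.sub_apply, LinearMap.comp_apply, LinearMap.mulLeft_apply, hc]
        ring_nf
      rw [key]
      exact ih (m := m) (n := 0) (by omega) (h₁ r) h₂
    | m + 1, n + 1, hmn =>
      have key : (δ₁ ∘ₗ δ₂) ∘ₗ LinearMap.mulLeft A r - LinearMap.mulLeft A r ∘ₗ (δ₁ ∘ₗ δ₂)
          = (δ₁ ∘ₗ LinearMap.mulLeft A r - LinearMap.mulLeft A r ∘ₗ δ₁) ∘ₗ δ₂
            + δ₁ ∘ₗ (δ₂ ∘ₗ LinearMap.mulLeft A r - LinearMap.mulLeft A r ∘ₗ δ₂) := by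
        ext x
        simp only [LinearMap.sub_apply, LinearMap.add_apply, LinearMap.comp_apply,
          LinearMap.mulLeft_apply, map_sub]
        ring
      rw [key]
      exact isDiffOpOfOrder_add (ih (by omega) (h₁ r) h₂) (ih (by omega) h₁ (h₂ r))

lemma isDiffOp_comp {δ₁ δ₂ : R →ₗ[A] R} (h₁ : IsDiffOp A δ₁) (h₂ : IsDiffOp A δ₂) :
    IsDiffOp A (δ₁ ∘ₗ δ₂) := by
  obtain ⟨m, h₁⟩ := h₁
  obtain ⟨n, h₂⟩ := h₂
  exact ⟨m + n, isDiffOpOfOrder_comp rfl h₁ h₂⟩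

variable {S : Type*} [CommRing S] [Algebra A S] [Algebra R S] [IsScalarTower A R S]

lemma isDiffOpOfOrder_restrictOp (β : S →ₗ[R] R) {n : ℕ} {δ : S →ₗ[A] S}
    (h : IsDiffOpOfOrder A n δ) : IsDiffOpOfOrder A n (restrictOp A R S β δ) := by
  induction n generalizing δ with
  | zero =>
    obtain ⟨c, hc⟩ := h
    refine ⟨β c, fun x => ?_⟩
    show β (δ (algebraMap R S x)) = β c * x
    rw [hc, mul_comm, ← Algebra.smul_def, map_smul, smul_eq_mul, mul_comm]
  | succ n ih =>
    intro r
    have key : restrictOp A R S β δ ∘ₗ LinearMap.mulLeft A r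
          - LinearMap.mulLeft A r ∘ₗ restrictOp A R S β δ
        = restrictOp A R S β (δ ∘ₗ LinearMap.mulLeft A (algebraMap R S r)
          - LinearMap.mulLeft A (algebraMap R S r) ∘ₗ δ) := by
      ext x
      show β (δ (algebraMap R S (r * x))) - r * β (δ (algebraMap R S x))
        = β (δ (algebraMap R S r * algebraMap R S x) - algebraMap R S r * δ (algebraMap R S x))
      rw [map_sub, map_mul]
      congr 1
      rw [← Algebra.smul_def, map_smul, smul_eq_mul]
    rw [key]
    exact ih (h (algebraMap R S r))

lemma isDiffOp_restrictOp (β : S →ₗ[R] R) {δ : S →ₗ[A] S} (h : IsDiffOp A δ) :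
    IsDiffOp A (restrictOp A R S β δ) := by
  obtain ⟨n, h⟩ := h
  exact ⟨n, isDiffOpOfOrder_restrictOp β h⟩

end Aux


/-- Proposition `PropFinLenght`.  Let `A ⊆ R ⊆ S` be Noetherian rings
such that the inclusion `R ⊆ S` has an `R`-linear splitting `β`, and let `M ⊆ N` be a
differential direct summand compatible with `β`.  Then
`λ_{D_{R|A}}(M) ≤ λ_{D_{S|A}}(N)`. -/
theorem dLength_le_of_diffDirectSummand
    (A R S : Type*) [CommRing A] [CommRing R] [CommRing S]
    [IsNoetherianRing A] [IsNoetherianRing R] [IsNoetherianRing S]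
    [Algebra A R] [Algebra A S] [Algebra R S] [IsScalarTower A R S]
    (hAR : Function.Injective (algebraMap A R))
    (hRS : Function.Injective (algebraMap R S))
    (β : S →ₗ[R] R) (hβ : ∀ r : R, β (algebraMap R S r) = r)
    (M : Type*) [AddCommGroup M] [Module A M] [Module R M] [IsScalarTower A R M]
    (N : Type*) [AddCommGroup N] [Module A N] [Module R N] [Module S N]
    [IsScalarTower A S N] [IsScalarTower R S N] [IsScalarTower A R N]
    (actM : DAction A R M) (actN : DAction A S N)
    (dds : DiffDirectSummand β actM actN) :
    dLength actM ≤ dLength actN := by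
  classical
  set T : Submodule R M → Set N := fun V =>
    {x | ∃ δ : S →ₗ[A] S, IsDiffOp A δ ∧ ∃ v ∈ V, x = actN.act δ (dds.incl v)} with hT
  have hid : IsDiffOp A (LinearMap.mulLeft A (1 : S)) := isDiffOp_mulLeft 1
  have act_one : ∀ x : N, actN.act (LinearMap.mulLeft A (1 : S)) x = x := fun x => by
    rw [actN.act_mulLeft]; simp
  -- the span of `T V` is stable under differential operators
  have key1 : ∀ V : Submodule R M, ∀ x ∈ Submodule.span S (T V),
      ∀ δ : S →ₗ[A] S, IsDiffOp A δ → actN.act δ x ∈ Submodule.span S (T V) := by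
    intro V x hx
    induction hx using Submodule.span_induction with
    | mem y hy =>
      obtain ⟨δ₀, hδ₀, v, hv, rfl⟩ := hy
      intro δ hδ
      have h1 : actN.act δ (actN.act δ₀ (dds.incl v)) = actN.act (δ ∘ₗ δ₀) (dds.incl v) := by
        rw [actN.act_comp δ δ₀ hδ hδ₀]; rfl
      rw [h1]
      exact Submodule.subset_span ⟨δ ∘ₗ δ₀, isDiffOp_comp hδ hδ₀, v, hv, rfl⟩
    | zero => intro δ hδ; simp
    | add y z hy hz ihy ihz =>
      intro δ hδ
      rw [map_add]
      exact Submodule.add_mem _ (ihy δ hδ) (ihz δ hδ)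
    | smul s y hy ihy =>
      intro δ hδ
      have h1 : s • y = actN.act (LinearMap.mulLeft A s) y := (actN.act_mulLeft s y).symm
      rw [h1, ← LinearMap.comp_apply, ← actN.act_comp δ _ hδ (isDiffOp_mulLeft s)]
      exact ihy (δ ∘ₗ LinearMap.mulLeft A s) (isDiffOp_comp hδ (isDiffOp_mulLeft s))
  -- applying `θ` to the span lands back in `V`
  have key2 : ∀ V : Submodule R M, actM.IsDSubmodule V → ∀ x ∈ Submodule.span S (T V),
      dds.theta x ∈ V := by
    intro V hV x hx
    have main : ∀ x ∈ Submodule.span S (T V), ∀ δ : S →ₗ[A] S, IsDiffOp A δ →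
        dds.theta (actN.act δ x) ∈ V := by
      intro x hx
      induction hx using Submodule.span_induction with
      | mem y hy =>
        obtain ⟨δ₀, hδ₀, v, hv, rfl⟩ := hy
        intro δ hδ
        have h1 : actN.act δ (actN.act δ₀ (dds.incl v)) = actN.act (δ ∘ₗ δ₀) (dds.incl v) := by
          rw [actN.act_comp δ δ₀ hδ hδ₀]; rfl
        rw [h1, dds.compat _ (isDiffOp_comp hδ hδ₀)]
        exact hV _ (isDiffOp_restrictOp β (isDiffOp_comp hδ hδ₀)) v hv
      | zero => intro δ hδ; simp
      | add y z hy hz ihy ihz =>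
        intro δ hδ
        rw [map_add, map_add]
        exact Submodule.add_mem _ (ihy δ hδ) (ihz δ hδ)
      | smul s y hy ihy =>
        intro δ hδ
        have h1 : s • y = actN.act (LinearMap.mulLeft A s) y := (actN.act_mulLeft s y).symm
        rw [h1, ← LinearMap.comp_apply, ← actN.act_comp δ _ hδ (isDiffOp_mulLeft s)]
        exact ihy (δ ∘ₗ LinearMap.mulLeft A s) (isDiffOp_comp hδ (isDiffOp_mulLeft s))
    have h := main x hx (LinearMap.mulLeft A (1 : S)) hid
    rwa [act_one] at h
  have hsub : ∀ V : Submodule R M, actN.IsDSubmodule (Submodule.span S (T V)) :=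
    fun V δ hδ v hv => key1 V v hv δ hδ
  have hmem : ∀ (V : Submodule R M), ∀ m ∈ V, dds.incl m ∈ Submodule.span S (T V) := by
    intro V m hm
    refine Submodule.subset_span ⟨LinearMap.mulLeft A (1 : S), hid, m, hm, ?_⟩
    rw [act_one]
  set F : {V : Submodule R M // actM.IsDSubmodule V} →
      {W : Submodule S N // actN.IsDSubmodule W} :=
    fun V => ⟨Submodule.span S (T V.1), hsub V.1⟩ with hF
  have hstrict : StrictMono F := by
    intro V W hVW
    have hVW' : V.1 < W.1 := hVW
    have hle : Submodule.span S (T V.1) ≤ Submodule.span S (T W.1) := by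
      apply Submodule.span_mono
      rintro x ⟨δ, hδ, v, hv, rfl⟩
      exact ⟨δ, hδ, v, hVW'.le hv, rfl⟩
    obtain ⟨w, hwW, hwV⟩ := SetLike.exists_of_lt hVW'
    have hne : Submodule.span S (T V.1) ≠ Submodule.span S (T W.1) := by
      intro heq
      have h1 : dds.incl w ∈ Submodule.span S (T V.1) := by
        rw [heq]; exact hmem W.1 w hwW
      have h2 : dds.theta (dds.incl w) ∈ V.1 := key2 V.1 V.2 _ h1
      rw [dds.split] at h2
      exact hwV h2
    show (⟨Submodule.span S (T V.1), hsub V.1⟩ :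
        {W : Submodule S N // actN.IsDSubmodule W}) < ⟨Submodule.span S (T W.1), hsub W.1⟩
    exact Subtype.mk_lt_mk.mpr (lt_of_le_of_ne hle hne)
  exact Order.krullDim_le_of_strictMono F hstrict
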